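/- Let τ ∈ S_d be non-monotone with d ≥ 3. Then the open interval (i(τ), τ) in the consecutive pattern poset contains exactly two elements, namely the distinct standardizations st(τ(1)…τ(d−1)) and st(τ(2)…τ(d)). -/

import Mathlib

/-- Standardization of a list of distinct naturals: replace each entry by its rank
(the number of entries less than or equal to it). -/
def stdize (s : List ℕ) : List ℕ := s.map (fun x => (s.filter (· ≤ x)).length)

/-- All contiguous subwords (infixes) of a list. -/
def infixes (l : List ℕ) : List (List ℕ) := l.inits.flatMap List.tails

/-- `l` is a permutation of `{1,…,d}` where `d = l.length ≥ 1`; these are the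
elements of the consecutive pattern poset. -/
def IsPermList (l : List ℕ) : Prop := l ≠ [] ∧ l.Perm (List.range' 1 l.length)

/-- Consecutive pattern containment: `σ ≤ τ` iff `σ` is the standardization of
some contiguous subsequence of `τ`. -/
def PattLE (σ τ : List ℕ) : Prop := σ ∈ (infixes τ).map stdize

instance (σ τ : List ℕ) : Decidable (PattLE σ τ) :=
  inferInstanceAs (Decidable (σ ∈ (infixes τ).map stdize))

/-- A permutation is monotone if its letters strictly increase or strictly decrease. -/
def MonotoneList (l : List ℕ) : Prop := l.Chain' (· < ·) ∨ l.Chain' (· > ·)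

/-- The interior `i(τ)`: standardization of `τ` with first and last letters removed. -/
def pattInterior (τ : List ℕ) : List ℕ := stdize τ.tail.dropLast

/-- Length of the longest proper prefix of `τ` whose standardization is also the
standardization of a suffix of `τ`. -/
def extLen (τ : List ℕ) : ℕ :=
  Nat.findGreatest (fun k => stdize (τ.take k) = stdize (τ.drop (τ.length - k))) (τ.length - 1)

/-- The exterior `x(τ)`: the longest permutation that is both a proper prefix and a
suffix of `τ`. -/
def pattExterior (τ : List ℕ) : List ℕ := stdize (τ.take (extLen τ))

/-- The closed interval `[σ,τ]` in the consecutive pattern poset, as a `Finset`. -/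
def pattInterval (σ τ : List ℕ) : Finset (List ℕ) :=
  ((infixes τ).map stdize).toFinset.filter (fun z => PattLE σ z)

/-- The open interval `(σ,τ)` in the consecutive pattern poset, as a `Finset`. -/
def openPattInterval (σ τ : List ℕ) : Finset (List ℕ) :=
  ((infixes τ).map stdize).toFinset.filter (fun z => PattLE σ z ∧ z ≠ σ ∧ z ≠ τ)

/-- `τ` covers `σ` in the consecutive pattern poset: `σ < τ` and no element lies
strictly between them. -/
def CoveredBy (σ τ : List ℕ) : Prop :=
  PattLE σ τ ∧ σ ≠ τ ∧ ¬ ∃ ρ, IsPermList ρ ∧ PattLE σ ρ ∧ PattLE ρ τ ∧ ρ ≠ σ ∧ ρ ≠ τ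

/-- `c` is a maximal chain of the interval `[σ,τ]`: it starts at `τ`, ends at `σ`,
and each element covers the next. -/
def IsMaxChainPatt (σ τ : List ℕ) (c : List (List ℕ)) : Prop :=
  c.head? = some τ ∧ c.getLast? = some σ ∧ c.Chain' (fun a b => CoveredBy b a)

/-- rank function -/
def rankf (l : List ℕ) (x : ℕ) : ℕ := (l.filter (· ≤ x)).length

lemma stdize_eq_map (l : List ℕ) : stdize l = l.map (rankf l) := rfl

lemma length_stdize (l : List ℕ) : (stdize l).length = l.length := by
  simp [stdize]

lemma mem_infixes {w l : List ℕ} : w ∈ infixes l ↔ w <:+: l := by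
  simp only [infixes, List.mem_flatMap, List.mem_inits, List.mem_tails]
  constructor
  · rintro ⟨p, hp, hw⟩
    exact hw.isInfix.trans hp.isInfix
  · rintro ⟨s, t, rfl⟩
    exact ⟨s ++ w, ⟨t, by simp⟩, ⟨s, rfl⟩⟩

lemma pattLE_iff {σ τ : List ℕ} : PattLE σ τ ↔ ∃ w, w <:+: τ ∧ stdize w = σ := by
  simp only [PattLE, List.mem_map, mem_infixes]

lemma rankf_eq_countP (l : List ℕ) (x : ℕ) : rankf l x = l.countP (· ≤ x) :=
  List.countP_eq_length_filter.symm

lemma rankf_mono (l : List ℕ) {x y : ℕ} (h : x ≤ y) : rankf l x ≤ rankf l y := by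
  rw [rankf_eq_countP, rankf_eq_countP]
  exact List.countP_mono_left (fun z _ hz => by
    simp only [decide_eq_true_eq] at *; omega)

lemma rankf_strict (l : List ℕ) {x y : ℕ} (hy : y ∈ l) (h : x < y) :
    rankf l x < rankf l y := by
  rw [rankf_eq_countP, rankf_eq_countP]
  have hperm := List.perm_cons_erase hy
  rw [hperm.countP_eq, hperm.countP_eq, List.countP_cons, List.countP_cons]
  have h1 : (decide (y ≤ x)) = false := by simp; omega
  have h2 : (decide (y ≤ y)) = true := by simp
  rw [h1, h2]
  norm_num
  have := List.countP_mono_left (l := l.erase y) (p := (· ≤ x)) (q := (· ≤ y))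
    (fun z _ hz => by simp only [decide_eq_true_eq] at *; omega)
  omega

lemma rankf_lt_iff {l : List ℕ} {x y : ℕ} (hx : x ∈ l) (hy : y ∈ l) :
    rankf l x < rankf l y ↔ x < y := by
  constructor
  · intro h
    by_contra hc
    push_neg at hc
    have := rankf_mono l hc
    omega
  · exact rankf_strict l hy

lemma rankf_le_iff {l : List ℕ} {x y : ℕ} (hx : x ∈ l) (hy : y ∈ l) :
    rankf l x ≤ rankf l y ↔ x ≤ y := by
  constructor
  · intro h
    by_contra hc
    push_neg at hc
    have := rankf_strict l hx hc
    omega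
  · exact rankf_mono l

lemma rankf_pos {l : List ℕ} {x : ℕ} (hx : x ∈ l) : 1 ≤ rankf l x := by
  have : x ∈ l.filter (· ≤ x) := List.mem_filter.2 ⟨hx, by simp⟩
  rw [rankf]
  exact List.length_pos_iff.2 (fun h => by simp [h] at this)

lemma rankf_le_length (l : List ℕ) (x : ℕ) : rankf l x ≤ l.length :=
  List.length_filter_le _ _

/-- stdize of a nodup list is a permutation of range' 1 n -/
lemma stdize_perm_range {l : List ℕ} (h : l.Nodup) :
    (stdize l).Perm (List.range' 1 l.length) := by
  have hnd : (stdize l).Nodup := by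
    rw [stdize_eq_map]
    exact List.Nodup.map_on (fun x hx y hy hxy => by
      rcases lt_trichotomy x y with h1 | h1 | h1
      · exact absurd hxy (Nat.ne_of_lt (rankf_strict l hy h1))
      · exact h1
      · exact absurd hxy.symm (Nat.ne_of_lt (rankf_strict l hx h1))) h
  have hsub : stdize l ⊆ List.range' 1 l.length := by
    intro a ha
    rw [stdize_eq_map, List.mem_map] at ha
    obtain ⟨x, hx, rfl⟩ := ha
    rw [List.mem_range']
    exact ⟨rankf l x - 1, by have := rankf_pos hx; have := rankf_le_length l x; omega⟩
  have : (stdize l).Subperm (List.range' 1 l.length) := List.subperm_of_subset hnd hsub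
  exact this.perm_of_length_le (by simp [length_stdize])

lemma countP_le_range' (x n : ℕ) (hx : x ≤ n) :
    (List.range' 1 n).countP (· ≤ x) = x := by
  have : List.range' 1 x ++ List.range' (1 + x) (n - x) = List.range' 1 n := by
    have h := List.range'_append (s := 1) (m := x) (n := n - x) (step := 1)
    simp only [Nat.mul_one, Nat.one_mul] at h
    rw [h]; congr 1; omega
  rw [← this, List.countP_append]
  have h1 : (List.range' 1 x).countP (· ≤ x) = x := by
    rw [List.countP_eq_length_filter, List.filter_eq_self.2, List.length_range']
    intro a ha
    rw [List.mem_range'] at ha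
    simp only [decide_eq_true_eq]
    omega
  have h2 : (List.range' (1 + x) (n - x)).countP (· ≤ x) = 0 := by
    rw [List.countP_eq_zero]
    intro a ha
    rw [List.mem_range'] at ha
    simp only [decide_eq_true_eq, not_le] at *
    omega
  omega

lemma stdize_of_perm_range {l : List ℕ} (h : l.Perm (List.range' 1 l.length)) :
    stdize l = l := by
  rw [stdize_eq_map]
  conv_rhs => rw [← List.map_id l]
  apply List.map_congr_left
  intro x hx
  have hxr : x ∈ List.range' 1 l.length := h.subset hx
  rw [List.mem_range'] at hxr
  rw [rankf_eq_countP, h.countP_eq, countP_le_range' x l.length (by omega)]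
  rfl

lemma stdize_stdize {l : List ℕ} (h : l.Nodup) : stdize (stdize l) = stdize l :=
  stdize_of_perm_range (by rw [length_stdize]; exact stdize_perm_range h)


/-- stdize is invariant under mapping by an order embedding on entries -/
lemma stdize_map {v : List ℕ} {f : ℕ → ℕ}
    (hf : ∀ x ∈ v, ∀ y ∈ v, (f x ≤ f y ↔ x ≤ y)) :
    stdize (v.map f) = stdize v := by
  rw [stdize_eq_map, stdize_eq_map, List.map_map]
  apply List.map_congr_left
  intro x hx
  simp only [Function.comp_apply]
  rw [rankf_eq_countP, rankf_eq_countP, List.countP_map]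
  apply List.countP_congr
  intro z hz
  simp only [Function.comp_apply, decide_eq_true_eq]
  exact hf z hz x hx

/-- if v is an infix of l, then stdize v is a consecutive pattern of stdize l -/
lemma pattLE_stdize_of_infix {v l : List ℕ} (hv : v <:+: l) :
    PattLE (stdize v) (stdize l) := by
  rw [pattLE_iff]
  refine ⟨v.map (rankf l), ?_, ?_⟩
  · rw [stdize_eq_map]; exact hv.map _
  · apply stdize_map
    intro x hx y hy
    exact rankf_le_iff (hv.subset hx) (hv.subset hy)

lemma infix_length_pred {w l : List ℕ} (h : w <:+: l) (hlen : w.length + 1 = l.length) :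
    w = l.dropLast ∨ w = l.tail := by
  obtain ⟨s, t, rfl⟩ := h
  simp only [List.length_append] at hlen
  have hst : s.length + t.length = 1 := by omega
  rcases s with _ | ⟨a, s'⟩
  · -- s = [], t has length 1
    simp only [List.length_nil] at hst
    rcases t with _ | ⟨b, t'⟩
    · simp at hst
    · have : t' = [] := by simpa using hst
      subst this
      left
      simp [List.dropLast_concat]
  · -- s nonempty, so t = []
    have hs' : s' = [] ∧ t = [] := by
      simp only [List.length_cons] at hst
      constructor <;> [skip; skip] <;> (rw [← List.length_eq_zero_iff]; omega)
    obtain ⟨rfl, rfl⟩ := hs'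
    right
    simp

lemma monotone_of_stdize_eq {τ : List ℕ} (hnd : τ.Nodup) (h3 : 3 ≤ τ.length)
    (H : stdize τ.dropLast = stdize τ.tail) : MonotoneList τ := by
  set d := τ.length with hd
  have hdl : τ.dropLast.length = d - 1 := by simp [hd]
  have htl : τ.tail.length = d - 1 := by simp [hd]
  -- pointwise version of H
  have Hpt : ∀ i (hi : i < d - 1),
      rankf τ.dropLast (τ[i]'(by omega)) = rankf τ.tail (τ[i+1]'(by omega)) := by
    intro i hi
    have h1 : (stdize τ.dropLast)[i]'(by rw [length_stdize]; omega)
        = (stdize τ.tail)[i]'(by rw [length_stdize]; omega) := List.getElem_of_eq H _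
    simp only [stdize_eq_map, List.getElem_map, List.getElem_dropLast,
      List.getElem_tail] at h1
    exact h1
  -- comparisons propagate
  have key : ∀ i (hi : i + 2 < d),
      ((τ[i]'(by omega)) < (τ[i+1]'(by omega)) ↔ (τ[i+1]'(by omega)) < (τ[i+2]'(by omega))) := by
    intro i hi
    have m1 : (τ[i]'(by omega)) ∈ τ.dropLast := by
      have : τ.dropLast[i]'(by omega) = τ[i]'(by omega) := List.getElem_dropLast ..
      rw [← this]; exact List.getElem_mem _
    have m2 : (τ[i+1]'(by omega)) ∈ τ.dropLast := by
      have : τ.dropLast[i+1]'(by omega) = τ[i+1]'(by omega) := List.getElem_dropLast ..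
      rw [← this]; exact List.getElem_mem _
    have m3 : (τ[i+1]'(by omega)) ∈ τ.tail := by
      have : τ.tail[i]'(by omega) = τ[i+1]'(by omega) := List.getElem_tail ..
      rw [← this]; exact List.getElem_mem _
    have m4 : (τ[i+2]'(by omega)) ∈ τ.tail := by
      have : τ.tail[i+1]'(by omega) = τ[i+1+1]'(by omega) := List.getElem_tail ..
      rw [← this]; exact List.getElem_mem _
    rw [← rankf_lt_iff m1 m2, Hpt i (by omega), Hpt (i+1) (by omega),
      rankf_lt_iff m3 m4]
  -- consecutive entries are distinct
  have hne : ∀ i (hi : i + 1 < d), (τ[i]'(by omega)) ≠ (τ[i+1]'(by omega)) := by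
    intro i hi h
    rw [hnd.getElem_inj_iff] at h
    omega
  by_cases hc : (τ[0]'(by omega)) < (τ[1]'(by omega))
  · left
    unfold List.Chain'; rw [List.isChain_iff_getElem]
    intro i hi
    induction i with
    | zero => exact hc
    | succ j ih =>
      have := (key j (by omega)).mp (ih (by omega))
      exact this
  · right
    unfold List.Chain'; rw [List.isChain_iff_getElem]
    intro i hi
    simp only [List.get_eq_getElem, gt_iff_lt]
    induction i with
    | zero =>
      have := hne 0 (by omega)
      have e : (τ[0+1]'(by omega)) = (τ[1]'(by omega)) := rfl
      omega
    | succ j ih =>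
      have hj := ih (by omega)
      have e : (τ[j+1+1]'(by omega)) = (τ[j+2]'(by omega)) := rfl
      have := (key j (by omega)).not.mp (by omega)
      have := hne (j+1) (by omega)
      omega

/-- For a non-monotone `τ` of length at least 3, the open interval `(i(τ), τ)`
contains exactly two elements, namely the distinct standardizations of
`τ(1)…τ(d−1)` and `τ(2)…τ(d)`. -/
theorem open_interval_interior (τ : List ℕ) (hτ : IsPermList τ) (h3 : 3 ≤ τ.length)
    (hm : ¬ MonotoneList τ) :
    stdize τ.dropLast ≠ stdize τ.tail ∧
    openPattInterval (pattInterior τ) τ = {stdize τ.dropLast, stdize τ.tail} := by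
  have hnd : τ.Nodup := hτ.2.nodup_iff.2 (List.nodup_range')
  set d := τ.length with hd
  have hsτ : stdize τ = τ := stdize_of_perm_range hτ.2
  have hiτlen : (pattInterior τ).length = d - 2 := by
    rw [pattInterior, length_stdize]
    simp only [List.length_dropLast, List.length_tail]
    omega
  have hne : stdize τ.dropLast ≠ stdize τ.tail :=
    fun h => hm (monotone_of_stdize_eq hnd h3 h)
  refine ⟨hne, ?_⟩
  ext z
  simp only [openPattInterval, Finset.mem_filter, List.mem_toFinset, List.mem_map,
    Finset.mem_insert, Finset.mem_singleton]
  constructor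
  · rintro ⟨⟨w, hwm, rfl⟩, hle, hne1, hne2⟩
    rw [mem_infixes] at hwm
    obtain ⟨u, hu, hus⟩ := pattLE_iff.mp hle
    have hulen : u.length = d - 2 := by
      have := length_stdize u
      rw [hus, hiτlen] at this
      omega
    have hwle : w.length ≤ d := hwm.length_le
    have huw : u.length ≤ w.length := by
      have := hu.length_le
      rwa [length_stdize] at this
    rcases (by omega : w.length = d ∨ w.length + 1 = d ∨ w.length = d - 2) with h | h | h
    · exfalso
      have : w = τ := hwm.eq_of_length h
      subst this
      exact hne2 hsτ
    · rcases infix_length_pred hwm h with rfl | rfl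
      · exact Or.inl rfl
      · exact Or.inr rfl
    · exfalso
      have hueq : u = stdize w := hu.eq_of_length (by rw [length_stdize]; omega)
      have hwnd : w.Nodup := hnd.sublist hwm.sublist
      apply hne1
      rw [← hus, hueq, stdize_stdize hwnd]
  · rintro (rfl | rfl)
    · refine ⟨⟨τ.dropLast, mem_infixes.2 (τ.dropLast_prefix).isInfix, rfl⟩, ?_, ?_, ?_⟩
      · rw [pattInterior, ← List.tail_dropLast]
        exact pattLE_stdize_of_infix (τ.dropLast.tail_suffix).isInfix
      · intro h
        have := congrArg List.length h
        rw [length_stdize, hiτlen, List.length_dropLast] at this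
        omega
      · intro h
        have := congrArg List.length h
        rw [length_stdize, List.length_dropLast] at this
        omega
    · refine ⟨⟨τ.tail, mem_infixes.2 (τ.tail_suffix).isInfix, rfl⟩, ?_, ?_, ?_⟩
      · rw [pattInterior]
        exact pattLE_stdize_of_infix (τ.tail.dropLast_prefix).isInfix
      · intro h
        have := congrArg List.length h
        rw [length_stdize, hiτlen, List.length_tail] at this
        omega
      · intro h
        have := congrArg List.length h
        rw [length_stdize, List.length_tail] at this
        omega
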